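/- Suppose the i.i.d. charges $\{q_i\}$ have standard normal distribution, $d\ge1$, and let $Z_N(\beta)$ be the quenched partition function of the charged polymer. Then $\mathbb{E}Z_N(1)=\infty$ for all sufficiently large $N$. (Hence the annealed critical inverse temperature equals $1$.) -/

import Mathlib

open MeasureTheory ProbabilityTheory Filter Finset Real
open scoped ENNReal

noncomputable section

/-- `v` is a unit step in `ℤ^d` (one of the `2d` nearest-neighbor increments). -/
def IsUnitStep {d : ℕ} (v : Fin d → ℤ) : Prop := (∑ j, |v j|) = 1

/-- `S` is a simple symmetric random walk on `ℤ^d` started at `0` under `P`: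
each sequence of admissible increments has probability `(2d)⁻ⁿ`. -/
def IsSRW {Ω : Type*} [MeasurableSpace Ω] (P : Measure Ω) {d : ℕ}
    (S : ℕ → Ω → Fin d → ℤ) : Prop :=
  (∀ i, Measurable (S i)) ∧ (∀ ω, S 0 ω = 0) ∧
  ∀ (n : ℕ) (v : Fin n → Fin d → ℤ), (∀ i, IsUnitStep (v i)) →
    P {ω | ∀ i : Fin n, S (i + 1) ω - S i ω = v i} = (1 / (2 * d) : ℝ≥0∞) ^ n

/-- Local time of the walk at site `x` up to time `N - 1`. -/
def locCount {Ω : Type*} {d : ℕ} (S : ℕ → Ω → Fin d → ℤ) (N : ℕ)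
    (x : Fin d → ℤ) (ω : Ω) : ℕ :=
  ((Finset.range N).filter (fun i => S i ω = x)).card

/-- Total charge at site `x` for charges `q` and path `S`, among monomers `0 ≤ i < N`. -/
def Qof {d : ℕ} (N : ℕ) (q : ℕ → ℝ) (S : ℕ → Fin d → ℤ) (x : Fin d → ℤ) : ℝ :=
  ∑ i ∈ Finset.range N, if S i = x then q i else 0

/-- Energy `H_N = ∑_x (Q_N^x)²` (the sum over all of `ℤ^d` reduces to visited sites). -/
def Hof {d : ℕ} (N : ℕ) (q : ℕ → ℝ) (S : ℕ → Fin d → ℤ) : ℝ :=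
  ∑ x ∈ (Finset.range N).image S, (Qof N q S x) ^ 2

/-- Quenched partition function of the charged polymer: the charges live on
`(Ωq, Pq)`, the walk on `(Ωs, Ps)`, and `Z N β ωq = E_S[exp(β H_N / N)]`. -/
def Zq {d : ℕ} {Ωq Ωs : Type*} [MeasurableSpace Ωs] (Ps : Measure Ωs)
    (q : ℕ → Ωq → ℝ) (S : ℕ → Ωs → Fin d → ℤ) (N : ℕ) (β : ℝ) (ωq : Ωq) : ℝ :=
  ∫ ωs, Real.exp (β * Hof N (fun i => q i ωq) (fun i => S i ωs) / N) ∂Ps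

/-! ### Auxiliary lemmas -/

/-- MGF of a standard gaussian, in `lintegral` form. -/
lemma aux_gauss_mgf (l : ℝ) :
    ∫⁻ x, ENNReal.ofReal (Real.exp (l * x)) ∂(gaussianReal 0 1) =
      ENNReal.ofReal (Real.exp (l ^ 2 / 2)) := by
  rw [gaussianReal_of_var_ne_zero 0 one_ne_zero,
    lintegral_withDensity_eq_lintegral_mul _ (measurable_gaussianPDF 0 1)
      (by exact (measurable_id.const_mul l).exp.ennreal_ofReal)]
  have key : ∀ x : ℝ, (gaussianPDF 0 1 * fun x => ENNReal.ofReal (rexp (l * x))) x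
      = ENNReal.ofReal (rexp (l ^ 2 / 2)) * gaussianPDF l 1 x := by
    intro x
    simp only [Pi.mul_apply, gaussianPDF, gaussianPDFReal, NNReal.coe_one, mul_one, sub_zero]
    rw [← ENNReal.ofReal_mul (by positivity), ← ENNReal.ofReal_mul (by positivity)]
    congr 1
    rw [mul_assoc, ← Real.exp_add, mul_comm (rexp _), mul_assoc, ← Real.exp_add]
    congr 2
    ring
  simp_rw [key]
  rw [lintegral_const_mul _ (measurable_gaussianPDF l 1),
    lintegral_gaussianPDF_eq_one l one_ne_zero, mul_one]

/-- divergence of `E exp(c g²)` for a standard gaussian when `c ≥ 1/2`. -/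
lemma aux_gauss_sq_div (c : ℝ) (hc : 1/2 ≤ c) :
    ∫⁻ x, ENNReal.ofReal (Real.exp (c * x ^ 2)) ∂(gaussianReal 0 1) = ∞ := by
  rw [gaussianReal_of_var_ne_zero 0 one_ne_zero,
    lintegral_withDensity_eq_lintegral_mul _ (measurable_gaussianPDF 0 1)
      (by exact ((measurable_id.pow_const 2).const_mul c).exp.ennreal_ofReal)]
  have key : ∀ x : ℝ, ENNReal.ofReal ((Real.sqrt (2 * π))⁻¹)
      ≤ (gaussianPDF 0 1 * fun x => ENNReal.ofReal (rexp (c * x ^ 2))) x := by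
    intro x
    simp only [Pi.mul_apply, gaussianPDF, gaussianPDFReal, NNReal.coe_one, mul_one, sub_zero]
    rw [← ENNReal.ofReal_mul (by positivity)]
    apply ENNReal.ofReal_le_ofReal
    rw [mul_assoc, ← Real.exp_add]
    nth_rewrite 1 [← mul_one (Real.sqrt (2*π))⁻¹]
    gcongr
    rw [← Real.exp_zero]
    apply Real.exp_le_exp.2
    nlinarith [sq_nonneg x]
  refine top_le_iff.1 ?_
  calc (∞ : ℝ≥0∞) = ∫⁻ _ : ℝ, ENNReal.ofReal ((Real.sqrt (2 * π))⁻¹) ∂volume := by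
        rw [lintegral_const, Real.volume_univ, ENNReal.mul_top]
        simp [Real.sqrt_eq_zero', Real.pi_pos.le, Real.pi_pos.ne',
          ENNReal.ofReal_eq_zero, not_le]
        positivity
    _ ≤ _ := lintegral_mono key

/-- independence factorizes `lintegral`s of products. -/
lemma aux_lintegral_prod_indep {Ω : Type*} [MeasurableSpace Ω] (μ : Measure Ω)
    [IsProbabilityMeasure μ] (g : ℕ → Ω → ℝ≥0∞) (hg : ∀ i, Measurable (g i))
    (h : iIndepFun g μ) (s : Finset ℕ) :
    ∫⁻ ω, ∏ i ∈ s, g i ω ∂μ = ∏ i ∈ s, ∫⁻ ω, g i ω ∂μ := by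
  classical
  induction s using Finset.induction_on with
  | empty => simp
  | @insert a s hi ih =>
    have hpt : ∀ ω, ∏ i ∈ insert a s, g i ω
        = ((fun ω => ∏ i ∈ s, g i ω) * g a) ω := by
      intro ω; rw [Finset.prod_insert hi]; simp [mul_comm]
    simp_rw [hpt]
    have hmeas : Measurable (fun ω => ∏ i ∈ s, g i ω) :=
      Finset.measurable_prod _ (fun i _ => hg i)
    have hindepfun : IndepFun (fun ω => ∏ i ∈ s, g i ω) (g a) μ := by
      have h2 := h.indepFun_finsetProd_of_notMem hg hi
      have : (∏ j ∈ s, g j) = fun ω => ∏ i ∈ s, g i ω := by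
        funext ω; exact Finset.prod_apply ω s g
      rwa [this] at h2
    rw [lintegral_mul_eq_lintegral_mul_lintegral_of_indepFun hmeas (hg a) hindepfun, ih,
      Finset.prod_insert hi, mul_comm]

lemma aux_prod_mgf {Ωq : Type*} [MeasurableSpace Ωq] (Pq : Measure Ωq) [IsProbabilityMeasure Pq]
    (q : ℕ → Ωq → ℝ) (hqm : ∀ i, Measurable (q i))
    (hindep : iIndepFun q Pq)
    (hgauss : ∀ i, Measure.map (q i) Pq = gaussianReal 0 1) (l : ℝ) (E : Finset ℕ) :
    ∫⁻ ω, ENNReal.ofReal (Real.exp (l * ∑ i ∈ E, q i ω)) ∂Pq =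
      ENNReal.ofReal (Real.exp (l ^ 2 / 2)) ^ E.card := by
  classical
  have hφ : Measurable (fun x : ℝ => ENNReal.ofReal (Real.exp (l * x))) :=
    (measurable_id.const_mul l).exp.ennreal_ofReal
  have hg : ∀ i, Measurable (fun ω => ENNReal.ofReal (Real.exp (l * q i ω))) :=
    fun i => hφ.comp (hqm i)
  have hgi : iIndepFun
      (fun i ω => ENNReal.ofReal (Real.exp (l * q i ω))) Pq :=
    hindep.comp (fun _ x => ENNReal.ofReal (Real.exp (l * x))) (fun _ => hφ)
  have hsingle : ∀ i, ∫⁻ ω, ENNReal.ofReal (Real.exp (l * q i ω)) ∂Pq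
      = ENNReal.ofReal (Real.exp (l ^ 2 / 2)) := by
    intro i
    rw [← lintegral_map hφ (hqm i), hgauss i, aux_gauss_mgf]
  have hsum : ∀ ω, ENNReal.ofReal (Real.exp (l * ∑ i ∈ E, q i ω))
      = ∏ i ∈ E, ENNReal.ofReal (Real.exp (l * q i ω)) := by
    intro ω
    rw [Finset.mul_sum, Real.exp_sum, ← ENNReal.ofReal_prod_of_nonneg]
    intro i _; positivity
  simp_rw [hsum]
  rw [aux_lintegral_prod_indep Pq _ hg hgi, Finset.prod_congr rfl (fun i _ => hsingle i),
    Finset.prod_const]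

lemma aux_lintegral_exp_sq_sum_eq_top {Ωq : Type*} [MeasurableSpace Ωq] (Pq : Measure Ωq)
    [IsProbabilityMeasure Pq]
    (q : ℕ → Ωq → ℝ) (hqm : ∀ i, Measurable (q i))
    (hindep : iIndepFun q Pq)
    (hgauss : ∀ i, Measure.map (q i) Pq = gaussianReal 0 1)
    (N : ℕ) (hN : 1 ≤ N) (E : Finset ℕ) (hE : N ≤ 2 * E.card) :
    ∫⁻ ω, ENNReal.ofReal (Real.exp ((∑ i ∈ E, q i ω) ^ 2 / N)) ∂Pq = ∞ := by
  have hN0 : (0:ℝ) < N := by exact_mod_cast hN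
  set t : ℝ := Real.sqrt (2 / N) with ht
  have ht2 : t ^ 2 = 2 / N := Real.sq_sqrt (by positivity)
  set γ := gaussianReal 0 1 with hγ
  have hS : Measurable (fun ω => ∑ i ∈ E, q i ω) :=
    Finset.measurable_sum E (fun i _ => hqm i)
  have hpt : ∀ a : ℝ, ENNReal.ofReal (Real.exp (a ^ 2 / N))
      = ∫⁻ g, ENNReal.ofReal (Real.exp ((t * a) * g)) ∂γ := by
    intro a
    rw [aux_gauss_mgf (t * a)]
    congr 1
    rw [mul_pow, ht2]
    field_simp
  calc ∫⁻ ω, ENNReal.ofReal (Real.exp ((∑ i ∈ E, q i ω) ^ 2 / N)) ∂Pq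
      = ∫⁻ ω, ∫⁻ g, ENNReal.ofReal (Real.exp ((t * ∑ i ∈ E, q i ω) * g)) ∂γ ∂Pq := by
        simp_rw [← hpt]
    _ = ∫⁻ g, ∫⁻ ω, ENNReal.ofReal (Real.exp ((t * ∑ i ∈ E, q i ω) * g)) ∂Pq ∂γ := by
        apply lintegral_lintegral_swap
        apply Measurable.aemeasurable
        apply Measurable.ennreal_ofReal
        apply Real.measurable_exp.comp
        exact ((hS.comp measurable_fst).const_mul t).mul measurable_snd
    _ = ∫⁻ g, ENNReal.ofReal (Real.exp ((t * g) ^ 2 / 2)) ^ E.card ∂γ := by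
        apply lintegral_congr
        intro g
        have : ∀ ω, (t * ∑ i ∈ E, q i ω) * g = (t * g) * ∑ i ∈ E, q i ω := by
          intro ω; ring
        simp_rw [this]
        exact aux_prod_mgf Pq q hqm hindep hgauss (t * g) E
    _ = ∫⁻ g, ENNReal.ofReal (Real.exp ((E.card * (t ^ 2 / 2)) * g ^ 2)) ∂γ := by
        apply lintegral_congr
        intro g
        rw [← ENNReal.ofReal_pow (Real.exp_pos _).le, ← Real.exp_nat_mul]
        congr 2
        rw [mul_pow]
        ring
    _ = ∞ := by
        apply aux_gauss_sq_div
        rw [ht2]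
        have h2 : (N:ℝ) ≤ 2 * E.card := by exact_mod_cast hE
        have h3 : (E.card : ℝ) * (2 / (N:ℝ) / 2) = (E.card : ℝ) / N := by
          field_simp
        rw [h3, div_le_div_iff₀ (by norm_num : (0:ℝ) < 2) hN0]
        linarith

lemma aux_Hof_congr {d N : ℕ} (q : ℕ → ℝ) {S₁ S₂ : ℕ → Fin d → ℤ}
    (h : ∀ i < N, S₁ i = S₂ i) : Hof N q S₁ = Hof N q S₂ := by
  have himg : (Finset.range N).image S₁ = (Finset.range N).image S₂ :=
    Finset.image_congr (fun i hi => h i (Finset.mem_range.1 (by simpa using hi)))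
  have hQ : ∀ x, Qof N q S₁ x = Qof N q S₂ x := by
    intro x
    apply Finset.sum_congr rfl
    intro i hi
    rw [h i (Finset.mem_range.1 hi)]
  unfold Hof
  rw [himg]
  exact Finset.sum_congr rfl fun x _ => by rw [hQ]

lemma aux_Hof_nonneg {d N : ℕ} (q : ℕ → ℝ) (S : ℕ → Fin d → ℤ) : 0 ≤ Hof N q S :=
  Finset.sum_nonneg fun x _ => sq_nonneg _

lemma aux_Hof_le {d N : ℕ} (q : ℕ → ℝ) (S : ℕ → Fin d → ℤ) :
    Hof N q S ≤ (∑ i ∈ Finset.range N, |q i|) ^ 2 := by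
  classical
  set B := ∑ i ∈ Finset.range N, |q i| with hB
  have hB0 : 0 ≤ B := Finset.sum_nonneg fun i _ => abs_nonneg _
  set R : (Fin d → ℤ) → ℝ := fun x => ∑ i ∈ Finset.range N, (if S i = x then |q i| else 0)
    with hRdef
  have hR0 : ∀ x, 0 ≤ R x := fun x => Finset.sum_nonneg fun i _ => by split <;> simp [abs_nonneg]
  have hR : ∀ x, |Qof N q S x| ≤ R x := by
    intro x
    refine (Finset.abs_sum_le_sum_abs _ _).trans ?_
    apply Finset.sum_le_sum
    intro i _
    split <;> simp
  have hRB : ∀ x, R x ≤ B := by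
    intro x
    apply Finset.sum_le_sum
    intro i _
    split <;> simp [abs_nonneg]
  calc Hof N q S ≤ ∑ x ∈ (Finset.range N).image S, R x * B := by
        apply Finset.sum_le_sum
        intro x _
        calc (Qof N q S x) ^ 2 = |Qof N q S x| * |Qof N q S x| := by
              rw [← abs_mul, abs_mul_self, sq]
          _ ≤ R x * B := mul_le_mul (hR x) ((hR x).trans (hRB x)) (abs_nonneg _) (hR0 x)
    _ = (∑ x ∈ (Finset.range N).image S, R x) * B := (Finset.sum_mul _ _ _).symm
    _ ≤ B * B := by
        apply mul_le_mul_of_nonneg_right _ hB0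
        have : ∑ x ∈ (Finset.range N).image S, R x
            = ∑ i ∈ Finset.range N, ∑ x ∈ (Finset.range N).image S,
                (if S i = x then |q i| else 0) := Finset.sum_comm
        rw [this]
        apply le_of_eq
        apply Finset.sum_congr rfl
        intro i hi
        rw [Finset.sum_ite_eq]
        simp [Finset.mem_image.2 ⟨i, hi, rfl⟩]
    _ = B ^ 2 := (sq B).symm

lemma aux_Qof_sq_le_Hof {d N : ℕ} (q : ℕ → ℝ) (S : ℕ → Fin d → ℤ) {x : Fin d → ℤ}
    (hx : x ∈ (Finset.range N).image S) : (Qof N q S x) ^ 2 ≤ Hof N q S := by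
  exact Finset.single_le_sum (f := fun y => (Qof N q S y) ^ 2) (fun y _ => sq_nonneg _) hx

lemma aux_card_evens (N : ℕ) :
    ((Finset.range N).filter (fun i => Even i)).card = (N + 1) / 2 := by
  induction N with
  | zero => simp
  | succ n ih =>
    rw [Finset.range_add_one, Finset.filter_insert]
    by_cases h : Even n
    · rw [if_pos h, Finset.card_insert_of_notMem (by simp), ih]
      obtain ⟨r, hr⟩ := h
      omega
    · rw [if_neg h, ih]
      have : n % 2 = 1 := Nat.odd_iff.1 (Nat.not_even_iff_odd.1 h)
      omega

/-- for i.i.d. standard Gaussian charges, the annealed partition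
function at `β = 1` is infinite: `E[Z_N(1)] = ∞` for all sufficiently
large `N`. -/
theorem annealed_Z_infinite_gaussian {d : ℕ} (hd : 1 ≤ d) {Ωq Ωs : Type*}
    [MeasurableSpace Ωq] [MeasurableSpace Ωs]
    (Pq : Measure Ωq) [IsProbabilityMeasure Pq]
    (Ps : Measure Ωs) [IsProbabilityMeasure Ps]
    (q : ℕ → Ωq → ℝ) (hqm : ∀ i, Measurable (q i))
    (hindep : iIndepFun q Pq)
    (hgauss : ∀ i, Measure.map (q i) Pq = gaussianReal 0 1)
    (S : ℕ → Ωs → Fin d → ℤ) (hS : IsSRW Ps S) :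
    ∃ N₀ : ℕ, ∀ N ≥ N₀, ∫⁻ ωq, ENNReal.ofReal (Zq Ps q S N 1 ωq) ∂Pq = ∞ := by
  classical
  obtain ⟨hSm, hSzero, hSP⟩ := hS
  refine ⟨1, fun N hN => ?_⟩
  have hN0 : (0:ℝ) < N := by exact_mod_cast hN
  set E : Finset ℕ := (Finset.range N).filter (fun i => Even i) with hEdef
  have hcardE : N ≤ 2 * E.card := by rw [hEdef, aux_card_evens]; omega
  set j0 : Fin d := ⟨0, hd⟩ with hj0
  set e : Fin d → ℤ := fun j => if j = j0 then 1 else 0 with he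
  have he0 : e ≠ 0 := by
    intro h
    have := congrFun h j0
    simp [he] at this
  set n : ℕ := N - 1 with hn
  set v : Fin n → Fin d → ℤ := fun i => if Even (i:ℕ) then e else -e with hv
  have hue : IsUnitStep e := by
    unfold IsUnitStep
    have habs : ∀ j, |e j| = if j = j0 then (1:ℤ) else 0 := by
      intro j; rw [he]; by_cases h : j = j0 <;> simp [h]
    simp_rw [habs]
    rw [Finset.sum_ite_eq' Finset.univ j0 (fun _ => (1:ℤ))]
    simp
  have hstep : ∀ i, IsUnitStep (v i) := by
    intro i
    rw [hv]
    dsimp only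
    split
    · exact hue
    · unfold IsUnitStep at hue ⊢
      simpa using hue
  set A : Set Ωs := {ω | ∀ i : Fin n, S (i + 1) ω - S i ω = v i} with hA
  have hPA : Ps A = (1 / (2 * d) : ℝ≥0∞) ^ n := hSP n v hstep
  have hAmeas : MeasurableSet A := by
    have hAeq : A = ⋂ i : Fin n, (fun ω => S (i + 1) ω - S i ω) ⁻¹' {v i} := by
      ext ω; simp [hA, Set.mem_iInter]
    rw [hAeq]
    refine MeasurableSet.iInter fun i => ?_
    have hX : Measurable fun ω => S (i + 1) ω - S i ω := by
      apply measurable_pi_lambda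
      intro j
      exact ((measurable_pi_apply j).comp (hSm (i + 1))).sub
        ((measurable_pi_apply j).comp (hSm i))
    exact hX (measurableSet_singleton _)
  have hpath : ∀ ω ∈ A, ∀ k, k < N → S k ω = if Even k then 0 else e := by
    intro ω hω k
    induction k with
    | zero => intro _; simp [hSzero ω]
    | succ k ih =>
      intro hk
      have hkN : k < N := Nat.lt_of_succ_lt hk
      have hkn : k < n := by omega
      have hstepk : S (k + 1) ω - S k ω = v ⟨k, hkn⟩ := hω ⟨k, hkn⟩
      have hrec : S (k + 1) ω = v ⟨k, hkn⟩ + S k ω := eq_add_of_sub_eq hstepk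
      rw [hrec, ih hkN, hv]
      by_cases hke : Even k
      · simp [hke, Nat.even_add_one]
      · simp [hke, Nat.even_add_one]
  -- quenched lower bound
  have key : ∀ ωq, ((Ps A).toReal) * Real.exp ((∑ i ∈ E, q i ωq) ^ 2 / N)
      ≤ Zq Ps q S N 1 ωq := by
    intro ωq
    rw [Zq]
    set qv : ℕ → ℝ := fun i => q i ωq with hqv
    set B : ℝ := ∑ i ∈ Finset.range N, |qv i| with hBdef
    set f : Ωs → ℝ := fun ωs => Real.exp (1 * Hof N qv (fun i => S i ωs) / N) with hf
    have hfm : Measurable f := by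
      have h1 : f = (fun p : Fin N → Fin d → ℤ =>
          Real.exp (1 * Hof N qv (fun i => if h : i < N then p ⟨i, h⟩ else 0) / N))
          ∘ (fun ωs (i : Fin N) => S i ωs) := by
        funext ωs
        simp only [Function.comp_apply, hf]
        rw [aux_Hof_congr qv (S₂ := fun i => if h : i < N then S i ωs else 0)
          (fun i hi => by simp [hi])]
      rw [h1]
      exact (measurable_of_countable _).comp (measurable_pi_lambda _ fun i => hSm i)
    have hfpos : ∀ ωs, 0 ≤ f ωs := fun ωs => (Real.exp_pos _).le
    have hfle : ∀ ωs, f ωs ≤ Real.exp (B ^ 2) := by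
      intro ωs
      apply Real.exp_le_exp.2
      rw [one_mul]
      calc Hof N qv (fun i => S i ωs) / N ≤ Hof N qv (fun i => S i ωs) :=
            div_le_self (aux_Hof_nonneg qv _) (by exact_mod_cast hN)
        _ ≤ B ^ 2 := aux_Hof_le qv _
    have hfint : Integrable f Ps := by
      apply Integrable.mono' (integrable_const (Real.exp (B ^ 2))) hfm.aestronglyMeasurable
      apply ae_of_all
      intro ωs
      rw [Real.norm_eq_abs, abs_of_nonneg (hfpos ωs)]
      exact hfle ωs
    set S0 : ℝ := ∑ i ∈ E, qv i with hS0def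
    set g : Ωs → ℝ := A.indicator (fun _ => Real.exp (S0 ^ 2 / N)) with hg
    have hgint : Integrable g Ps := (integrable_const _).indicator hAmeas
    have hglef : g ≤ f := by
      intro ωs
      by_cases hω : ωs ∈ A
      · rw [hg, Set.indicator_of_mem hω]
        apply Real.exp_le_exp.2
        rw [one_mul]
        have hcond : ∀ i ∈ Finset.range N,
            ((if S i ωs = (0 : Fin d → ℤ) then qv i else 0) = if Even i then qv i else 0) := by
          intro i hi
          rw [hpath ωs hω i (Finset.mem_range.1 hi)]
          by_cases hev : Even i
          · simp [hev]
          · simp [hev, he0]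
        have hQ : Qof N qv (fun i => S i ωs) 0 = S0 := by
          unfold Qof
          rw [Finset.sum_congr rfl hcond, hS0def, hEdef, Finset.sum_filter]
        have h0mem : (0 : Fin d → ℤ) ∈ (Finset.range N).image (fun i => S i ωs) :=
          Finset.mem_image.2 ⟨0, Finset.mem_range.2 (by omega), hSzero ωs⟩
        have hnum : S0 ^ 2 ≤ Hof N qv (fun i => S i ωs) := by
          rw [← hQ]
          exact aux_Qof_sq_le_Hof qv _ h0mem
        gcongr
      · rw [hg, Set.indicator_of_notMem hω]
        exact hfpos ωs
    have hint := integral_mono hgint hfint hglef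
    rw [hg, integral_indicator_const _ hAmeas, smul_eq_mul] at hint
    exact hint
  -- conclude
  have hmeasS0 : Measurable fun ωq =>
      ENNReal.ofReal (Real.exp ((∑ i ∈ E, q i ωq) ^ 2 / N)) := by
    apply Measurable.ennreal_ofReal
    apply Real.measurable_exp.comp
    exact ((Finset.measurable_sum E fun i _ => hqm i).pow_const 2).div_const _
  have hDiv := aux_lintegral_exp_sq_sum_eq_top Pq q hqm hindep hgauss N hN E hcardE
  have hPA_ne0 : Ps A ≠ 0 := by
    rw [hPA]
    apply pow_ne_zero
    rw [one_div]
    exact ENNReal.inv_ne_zero.2 (ENNReal.mul_ne_top ENNReal.ofNat_ne_top (ENNReal.natCast_ne_top d))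
  have hpR : 0 < (Ps A).toReal := ENNReal.toReal_pos hPA_ne0 (measure_ne_top Ps A)
  refine top_le_iff.1 ?_
  calc (∞:ℝ≥0∞) = ENNReal.ofReal ((Ps A).toReal)
        * ∫⁻ ωq, ENNReal.ofReal (Real.exp ((∑ i ∈ E, q i ωq) ^ 2 / N)) ∂Pq := by
        rw [hDiv, ENNReal.mul_top (ENNReal.ofReal_pos.2 hpR).ne']
    _ = ∫⁻ ωq, ENNReal.ofReal ((Ps A).toReal)
        * ENNReal.ofReal (Real.exp ((∑ i ∈ E, q i ωq) ^ 2 / N)) ∂Pq :=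
        (lintegral_const_mul _ hmeasS0).symm
    _ ≤ ∫⁻ ωq, ENNReal.ofReal (Zq Ps q S N 1 ωq) ∂Pq := by
        apply lintegral_mono
        intro ωq
        dsimp only
        rw [← ENNReal.ofReal_mul (p := (Ps A).toReal) ENNReal.toReal_nonneg]
        exact ENNReal.ofReal_le_ofReal (key ωq)
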